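/- Let S be a local symmetric good semigroup with maximal ideal M_S = S ∖ {0}. If M_S − M_S is symmetric, then α − μ_{M_S} ∈ S for every α ∈ M_S ∖ C_S. -/

import Mathlib

/-! Combinatorics of good semigroups in `ℤ^I` (value semigroups of curve
singularities), following Korell–Schulze–Tozzo. -/

section GoodSemigroups

variable {I : Type*} [Fintype I] [Nonempty I]

/-- Property (E0): `E` contains a translate of `ℕ^I`, i.e. an upper cone. -/
def propE0 (E : Set (I → ℤ)) : Prop :=
  ∃ α : I → ℤ, ∀ β : I → ℤ, α ≤ β → β ∈ E

/-- Property (E1): closure under componentwise minima. -/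
def propE1 (E : Set (I → ℤ)) : Prop :=
  ∀ α ∈ E, ∀ β ∈ E, (fun i => min (α i) (β i)) ∈ E

/-- Property (E2). -/
def propE2 (E : Set (I → ℤ)) : Prop :=
  ∀ α ∈ E, ∀ β ∈ E, ∀ j : I, α j = β j →
    ∃ ε ∈ E, α j < ε j ∧
      ∀ i : I, min (α i) (β i) ≤ ε i ∧ (α i ≠ β i → ε i = min (α i) (β i))

/-- A good semigroup: a submonoid of `ℤ^I` whose unique minimal element is `0`
(equivalently all elements are `≥ 0`) satisfying (E0), (E1) and (E2). -/
def IsGoodSemigroup (S : Set (I → ℤ)) : Prop :=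
  (0 : I → ℤ) ∈ S ∧ (∀ α ∈ S, ∀ β ∈ S, α + β ∈ S) ∧ (∀ α ∈ S, 0 ≤ α) ∧
    propE0 S ∧ propE1 S ∧ propE2 S

/-- The difference `E − F = {α : α + F ⊆ E}`. -/
def sgDiff (E F : Set (I → ℤ)) : Set (I → ℤ) :=
  {α | ∀ β ∈ F, α + β ∈ E}

/-- A semigroup ideal of a good semigroup `S`. -/
def IsSgIdeal (S E : Set (I → ℤ)) : Prop :=
  E.Nonempty ∧ (∀ α ∈ E, ∀ β ∈ S, α + β ∈ E) ∧ ∃ α ∈ S, ∀ β ∈ E, α + β ∈ S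

/-- A good semigroup ideal of `S`: a semigroup ideal satisfying (E1) and (E2). -/
def IsGoodIdeal (S E : Set (I → ℤ)) : Prop :=
  IsSgIdeal S E ∧ propE1 E ∧ propE2 E

/-- The (componentwise) minimal element `μ_E` of a good semigroup ideal. -/
noncomputable def sgMu (E : Set (I → ℤ)) : I → ℤ :=
  fun i => sInf {n : ℤ | ∃ α ∈ E, α i = n}

/-- The conductor ideal `C_E = E − ℕ^I`. -/
def sgCond (E : Set (I → ℤ)) : Set (I → ℤ) :=
  sgDiff E {β | 0 ≤ β}

/-- The conductor `γ_E = μ_{C_E} = inf {α : α + ℕ^I ⊆ E}`. -/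
noncomputable def sgGamma (E : Set (I → ℤ)) : I → ℤ :=
  sgMu (sgCond E)

/-- `τ_E = γ_E − 1`. -/
noncomputable def sgTau (E : Set (I → ℤ)) : I → ℤ :=
  sgGamma E - 1

/-- `Δ(α) = ⋃ i Δ_i(α)` where `Δ_i(α) = {β : β i = α i, β j > α j (j ≠ i)}`. -/
def sgDelta (α : I → ℤ) : Set (I → ℤ) :=
  ⋃ i : I, {β | β i = α i ∧ ∀ j : I, j ≠ i → α j < β j}

/-- The closed version `Δ̄(α)`. -/
def sgDeltaBar (α : I → ℤ) : Set (I → ℤ) :=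
  ⋃ i : I, {β | β i = α i ∧ ∀ j : I, j ≠ i → α j ≤ β j}

/-- A canonical ideal of `S`: a good semigroup ideal `K` such that any good
semigroup ideal `E` with `γ_E = γ_K` containing `K` equals `K`. -/
def IsCanonicalIdeal (S K : Set (I → ℤ)) : Prop :=
  IsGoodIdeal S K ∧
    ∀ E : Set (I → ℤ), IsGoodIdeal S E → sgGamma E = sgGamma K → K ⊆ E → E = K

/-- The normalized canonical ideal `K_S^0`. -/
noncomputable def sgK0 (S : Set (I → ℤ)) : Set (I → ℤ) :=
  {α | sgDelta (sgTau S - α) ∩ S = ∅}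

/-- A good semigroup is symmetric if it is a canonical ideal of itself. -/
def IsSymmetricSg (S : Set (I → ℤ)) : Prop :=
  IsGoodSemigroup S ∧ IsCanonicalIdeal S S

/-- A good semigroup is local if `0` is its only element with a zero coordinate. -/
def IsLocalSg (S : Set (I → ℤ)) : Prop :=
  ∀ α ∈ S, (∃ i : I, α i = 0) → α = 0

/-- A good semigroup ideal `E` is stable if `μ_E + (E − E) = E`. -/
noncomputable def IsStableSgIdeal (E : Set (I → ℤ)) : Prop :=
  (fun β => sgMu E + β) '' sgDiff E E = E

end GoodSemigroups

section GoodProofs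
set_option linter.unusedSectionVars false

variable {I : Type*} [Fintype I] [Nonempty I]

lemma mem_sgCond {G : Set (I → ℤ)} {w : I → ℤ} :
    w ∈ sgCond G ↔ ∀ β : I → ℤ, 0 ≤ β → w + β ∈ G := Iff.rfl

lemma sgMu_spec {E : Set (I → ℤ)} (hne : E.Nonempty)
    (hbdd : ∃ b : I → ℤ, ∀ e ∈ E, b ≤ e)
    (hinf : ∀ a ∈ E, ∀ b ∈ E, (fun i => min (a i) (b i)) ∈ E) :
    sgMu E ∈ E ∧ ∀ e ∈ E, sgMu E ≤ e := by
  classical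
  obtain ⟨b, hb⟩ := hbdd
  have hTbdd : ∀ i : I, BddBelow {n : ℤ | ∃ α ∈ E, α i = n} := by
    intro i
    exact ⟨b i, by rintro n ⟨α, hα, rfl⟩; exact hb α hα i⟩
  have hle : ∀ e ∈ E, sgMu E ≤ e := by
    intro e he i
    exact csInf_le (hTbdd i) ⟨e, he, rfl⟩
  refine ⟨?_, hle⟩
  have hattain : ∀ i : I, ∃ c ∈ E, c i = sgMu E i := by
    intro i
    have hne' : {n : ℤ | ∃ α ∈ E, α i = n}.Nonempty := ⟨hne.choose i, hne.choose, hne.choose_spec, rfl⟩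
    have := Int.csInf_mem hne' (hTbdd i)
    obtain ⟨c, hc, hci⟩ := this
    exact ⟨c, hc, hci⟩
  have key : ∀ F : Finset I, ∃ c ∈ E, ∀ i ∈ F, c i = sgMu E i := by
    intro F
    induction F using Finset.induction_on with
    | empty => exact ⟨hne.choose, hne.choose_spec, by simp⟩
    | @insert a F ha ih =>
        obtain ⟨c, hc, hcF⟩ := ih
        obtain ⟨w, hw, hwa⟩ := hattain a
        refine ⟨fun i => min (c i) (w i), hinf c hc w hw, ?_⟩
        intro i hi
        rcases Finset.mem_insert.mp hi with rfl | hiF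
        · have : sgMu E i ≤ c i := hle c hc i
          simp only [hwa]
          omega
        · have h1 : c i = sgMu E i := hcF i hiF
          have h2 : sgMu E i ≤ w i := hle w hw i
          simp only [h1]
          omega
  obtain ⟨c, hc, hcu⟩ := key Finset.univ
  have : c = sgMu E := funext fun i => hcu i (Finset.mem_univ i)
  exact this ▸ hc

lemma sgGamma_spec {G : Set (I → ℤ)} (hG : IsGoodSemigroup G) :
    sgGamma G ∈ sgCond G ∧ ∀ c ∈ sgCond G, sgGamma G ≤ c := by
  have hCsub : sgCond G ⊆ G := by
    intro c hc
    have := (mem_sgCond.mp hc) 0 le_rfl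
    simpa using this
  have hne : (sgCond G).Nonempty := by
    obtain ⟨α, hα⟩ := hG.2.2.2.1
    refine ⟨α, mem_sgCond.mpr fun β hβ => hα _ ?_⟩
    intro i
    have h := hβ i
    simp only [Pi.zero_apply] at h
    simp only [Pi.add_apply]
    omega
  have hbdd : ∃ b : I → ℤ, ∀ e ∈ sgCond G, b ≤ e :=
    ⟨0, fun e he => hG.2.2.1 e (hCsub he)⟩
  have hinf : ∀ a ∈ sgCond G, ∀ b ∈ sgCond G, (fun i => min (a i) (b i)) ∈ sgCond G := by
    intro a ha b hb
    rw [mem_sgCond]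
    intro β hβ
    have h1 := mem_sgCond.mp ha β hβ
    have h2 := mem_sgCond.mp hb β hβ
    have := hG.2.2.2.2.1 _ h1 _ h2
    have heq : (fun i => min ((a + β) i) ((b + β) i)) = (fun i => min (a i) (b i)) + β := by
      funext i
      simp [Pi.add_apply]
    rwa [heq] at this
  exact sgMu_spec hne hbdd hinf

lemma sgGamma_mem {G : Set (I → ℤ)} (hG : IsGoodSemigroup G) : sgGamma G ∈ G :=
  (fun hc => by simpa using (mem_sgCond.mp hc) 0 le_rfl) (sgGamma_spec hG).1

lemma sgGamma_nonneg {G : Set (I → ℤ)} (hG : IsGoodSemigroup G) : 0 ≤ sgGamma G :=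
  hG.2.2.1 _ (sgGamma_mem hG)

lemma mem_of_gamma_le {G : Set (I → ℤ)} (hG : IsGoodSemigroup G) {w : I → ℤ}
    (hw : sgGamma G ≤ w) : w ∈ G := by
  have h := mem_sgCond.mp (sgGamma_spec hG).1 (w - sgGamma G) (by intro i; simpa using hw i)
  have : sgGamma G + (w - sgGamma G) = w := by abel
  rwa [this] at h

lemma sgTau_apply {G : Set (I → ℤ)} (i : I) : sgTau G i = sgGamma G i - 1 := rfl

end GoodProofs
section GoodProofs2
set_option linter.unusedSectionVars false
variable {I : Type*} [Fintype I] [Nonempty I]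

/-- Key "climbing" lemma: if `G` contains an element with `i`-th coordinate `τ i` and all
other coordinates `≥ γ`, then it contains every such element. -/
lemma climb {G : Set (I → ℤ)} (hG : IsGoodSemigroup G) {s : I → ℤ} (hs : s ∈ G) (i : I)
    (hsi : s i = sgTau G i) (hsm : ∀ m, m ≠ i → sgGamma G m ≤ s m) :
    ∀ x : I → ℤ, x i = sgTau G i → (∀ m, m ≠ i → sgGamma G m ≤ x m) → x ∈ G := by
  classical
  intro x hxi hxm
  set γ := sgGamma G with hγdef
  have htau : sgTau G i = γ i - 1 := rfl
  -- the capping element z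
  set z : I → ℤ := fun m => if m = i then γ i else x m with hzdef
  have hzG : z ∈ G := by
    apply mem_of_gamma_le hG
    intro m
    by_cases hm : m = i
    · simp [hzdef, hm]; exact le_rfl
    · simp [hzdef, hm]; exact hxm m hm
  have main : ∀ n : ℕ, ∀ y, y ∈ G → y i = sgTau G i →
      (∀ m, m ≠ i → γ m ≤ y m ∧ y m ≤ x m) →
      (∑ m, (x m - y m)) ≤ (n : ℤ) → x ∈ G := by
    intro n
    induction n with
    | zero =>
        intro y hy hyi hym hsum
        have hterm : ∀ m : I, 0 ≤ x m - y m := by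
          intro m
          by_cases hm : m = i
          · subst hm; omega
          · have := (hym m hm).2; omega
        have hzero : ∀ m : I, x m - y m = 0 := by
          by_contra hcon
          push_neg at hcon
          obtain ⟨m, hm⟩ := hcon
          have h1 : 0 < x m - y m := lt_of_le_of_ne (hterm m) (Ne.symm hm)
          have h2 : (0:ℤ) < ∑ m, (x m - y m) := by
            calc (0:ℤ) < x m - y m := h1
            _ ≤ ∑ m, (x m - y m) := Finset.single_le_sum (fun k _ => hterm k) (Finset.mem_univ m)
          omega
        have : y = x := by
          funext m
          have := hzero m
          omega
        exact this ▸ hy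
    | succ n ih =>
        intro y hy hyi hym hsum
        by_cases hyx : y = x
        · exact hyx ▸ hy
        · have hterm : ∀ m : I, 0 ≤ x m - y m := by
            intro m
            by_cases hm : m = i
            · subst hm; omega
            · have := (hym m hm).2; omega
          have hex : ∃ m, y m < x m := by
            by_contra hcon
            push_neg at hcon
            exact hyx (funext fun m => le_antisymm (by have := hterm m; omega) (hcon m))
          obtain ⟨m, hm⟩ := hex
          have hmi : m ≠ i := by
            intro h; subst h; omega
          -- partner element
          set w : I → ℤ := fun l => if l = m then y m else (max (max (γ l) (y l)) (x l)) + 1 with hwdef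
          have hwbig : ∀ l, l ≠ m → max (max (γ l) (y l)) (x l) + 1 = w l := by
            intro l hl; simp [hwdef, hl]
          have hwG : w ∈ G := by
            apply mem_of_gamma_le hG
            intro l
            show γ l ≤ w l
            by_cases hl : l = m
            · subst hl
              have := (hym l hmi).1
              simp only [hwdef, if_pos rfl]
              omega
            · have h1 : γ l ≤ max (max (γ l) (y l)) (x l) :=
                le_trans (le_max_left _ _) (le_max_left _ _)
              have h2 := hwbig l hl
              omega
          have htie : y m = w m := by simp [hwdef]
          obtain ⟨ε, hε, hεm, hprop⟩ := hG.2.2.2.2.2 y hy w hwG m htie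
          have hεl : ∀ l, l ≠ m → ε l = y l := by
            intro l hl
            have hyw : y l ≤ max (max (γ l) (y l)) (x l) :=
              le_trans (le_max_right _ _) (le_max_left _ _)
            have h2 := hwbig l hl
            have hne : y l ≠ w l := by omega
            have h3 := (hprop l).2 hne
            have h4 : min (y l) (w l) = y l := by
              apply min_eq_left
              omega
            rw [h3, h4]
          -- new element y' = inf ε z
          set y' : I → ℤ := fun l => min (ε l) (z l) with hy'def
          have hy'G : y' ∈ G := hG.2.2.2.2.1 ε hε z hzG
          have hy'i : y' i = sgTau G i := by
            have h1 : ε i = y i := hεl i (Ne.symm hmi)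
            have h2 : y' i = min (ε i) (γ i) := by simp [hy'def, hzdef]
            omega
          have hy'm : ∀ l, l ≠ i → γ l ≤ y' l ∧ y' l ≤ x l := by
            intro l hl
            have h2 : y' l = min (ε l) (x l) := by simp [hy'def, hzdef, hl]
            by_cases hlm : l = m
            · subst hlm
              have h1 : min (y l) (w l) ≤ ε l := (hprop l).1
              have h3 : γ l ≤ y l := (hym l hl).1
              have h4 : y l = w l := htie
              omega
            · have h1 : ε l = y l := hεl l hlm
              have := hym l hl
              omega
          have hgain : y m + 1 ≤ y' m := by
            have h2 : y' m = min (ε m) (x m) := by simp [hy'def, hzdef, hmi]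
            omega
          have hother : ∀ l, l ≠ m → y l ≤ y' l := by
            intro l hl
            have h1 : ε l = y l := hεl l hl
            by_cases hli : l = i
            · have h2 : y' l = min (ε l) (γ l) := by simp [hy'def, hzdef, hli]
              have h3 : y l = sgTau G l := by rw [hli]; exact hyi
              have h4 : sgTau G l = γ l - 1 := by rw [hli]; exact htau
              omega
            · have h2 : y' l = min (ε l) (x l) := by simp [hy'def, hzdef, hli]
              have := (hym l hli).2
              omega
          have hy'sum : (∑ l, (x l - y' l)) ≤ (n : ℤ) := by
            have hlt : (∑ l, (x l - y' l)) < ∑ l, (x l - y l) := by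
              apply Finset.sum_lt_sum
              · intro l _
                by_cases hl : l = m
                · subst hl; omega
                · have := hother l hl; omega
              · exact ⟨m, Finset.mem_univ m, by omega⟩
            omega
          exact ih y' hy'G hy'i hy'm hy'sum
  -- start the climb
  set y₀ : I → ℤ := fun l => min (s l) (z l) with hy₀def
  have hy₀G : y₀ ∈ G := hG.2.2.2.2.1 s hs z hzG
  have hy₀i : y₀ i = sgTau G i := by
    have h2 : y₀ i = min (s i) (γ i) := by simp [hy₀def, hzdef]
    omega
  have hy₀m : ∀ m, m ≠ i → γ m ≤ y₀ m ∧ y₀ m ≤ x m := by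
    intro m hm
    have h2 : y₀ m = min (s m) (x m) := by simp [hy₀def, hzdef, hm]
    have h1 := hsm m hm
    have h3 := hxm m hm
    omega
  have hsum₀ : (∑ m, (x m - y₀ m)) ≤ ((∑ m, (x m - y₀ m)).toNat : ℤ) := Int.self_le_toNat _
  exact main _ y₀ hy₀G hy₀i hy₀m hsum₀

/-- `Δ(τ) ∩ G = ∅` for a good semigroup. -/
lemma delta_tau_empty {G : Set (I → ℤ)} (hG : IsGoodSemigroup G) :
    ∀ s ∈ G, ∀ i : I, ¬ (s i = sgTau G i ∧ ∀ m, m ≠ i → sgTau G m < s m) := by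
  classical
  rintro s hs i ⟨hsi, hrest⟩
  have hsm : ∀ m, m ≠ i → sgGamma G m ≤ s m := by
    intro m hm
    have h1 := hrest m hm
    have ht : sgTau G m = sgGamma G m - 1 := rfl
    omega
  have key := climb hG hs i hsi hsm
  set γ' : I → ℤ := fun m => if m = i then sgTau G i else sgGamma G m with hγ'def
  have hγ'C : γ' ∈ sgCond G := by
    rw [mem_sgCond]
    intro β hβ
    by_cases hβi : β i = 0
    · apply key
      · have : γ' i = sgTau G i := by simp [hγ'def]
        simp only [Pi.add_apply]
        omega
      · intro m hm
        have h2 : γ' m = sgGamma G m := by simp [hγ'def, hm]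
        have h1 := hβ m
        simp only [Pi.zero_apply] at h1
        simp only [Pi.add_apply]
        omega
    · apply mem_of_gamma_le hG
      intro m
      simp only [Pi.add_apply]
      have h1 := hβ m
      simp only [Pi.zero_apply] at h1
      by_cases hm : m = i
      · subst hm
        have h2 : γ' m = sgTau G m := by simp [hγ'def]
        have ht : sgTau G m = sgGamma G m - 1 := rfl
        omega
      · have h2 : γ' m = sgGamma G m := by simp [hγ'def, hm]
        omega
  have h3 : sgGamma G i ≤ γ' i := (sgGamma_spec hG).2 γ' hγ'C i
  have h4 : γ' i = sgTau G i := by simp [hγ'def]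
  have ht : sgTau G i = sgGamma G i - 1 := rfl
  omega

end GoodProofs2
section GoodProofs3
set_option linter.unusedSectionVars false
variable {I : Type*} [Fintype I] [Nonempty I]

lemma mem_sgDelta_iff {v s : I → ℤ} :
    s ∈ sgDelta v ↔ ∃ i : I, s i = v i ∧ ∀ j, j ≠ i → v j < s j := by
  simp [sgDelta]

/-- Membership in `K⁰` in terms of "hitting" `Δ(τ)`. -/
lemma mem_sgK0_iff {G : Set (I → ℤ)} {w : I → ℤ} :
    w ∈ sgK0 G ↔
      ¬ ∃ s ∈ G, ∃ i : I, w i + s i = sgTau G i ∧ ∀ m, m ≠ i → sgTau G m < w m + s m := by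
  constructor
  · rintro h ⟨s, hs, i, h1, h2⟩
    have hmem : s ∈ sgDelta (sgTau G - w) ∩ G := by
      refine ⟨mem_sgDelta_iff.mpr ⟨i, ?_, ?_⟩, hs⟩
      · simp only [Pi.sub_apply]; omega
      · intro j hj
        have := h2 j hj
        simp only [Pi.sub_apply]; omega
    rw [sgK0, Set.mem_setOf_eq] at h
    rw [h] at hmem
    exact absurd hmem (Set.notMem_empty s)
  · intro h
    rw [sgK0, Set.mem_setOf_eq, Set.eq_empty_iff_forall_notMem]
    rintro s ⟨hsd, hs⟩
    obtain ⟨i, h1, h2⟩ := mem_sgDelta_iff.mp hsd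
    refine h ⟨s, hs, i, ?_, ?_⟩
    · simp only [Pi.sub_apply] at h1; omega
    · intro m hm
      have := h2 m hm
      simp only [Pi.sub_apply] at this; omega

lemma subset_sgK0 {G : Set (I → ℤ)} (hG : IsGoodSemigroup G) : G ⊆ sgK0 G := by
  intro a ha
  rw [mem_sgK0_iff]
  rintro ⟨s, hs, i, h1, h2⟩
  refine delta_tau_empty hG (a + s) (hG.2.1 a ha s hs) i ⟨?_, ?_⟩
  · simpa using h1
  · intro m hm
    simpa using h2 m hm

lemma sgK0_nonneg {G : Set (I → ℤ)} (hG : IsGoodSemigroup G) {w : I → ℤ}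
    (hw : w ∈ sgK0 G) : 0 ≤ w := by
  classical
  by_contra hcon
  have : ∃ i, w i < 0 := by
    by_contra h
    push_neg at h
    exact hcon fun i => h i
  obtain ⟨i, hi⟩ := this
  set s : I → ℤ := fun m => if m = i then sgTau G i - w i else
      max (sgGamma G m) (sgTau G m - w m + 1) with hsdef
  have hsG : s ∈ G := by
    apply mem_of_gamma_le hG
    intro m
    by_cases hm : m = i
    · subst hm
      have ht : sgTau G m = sgGamma G m - 1 := rfl
      simp only [hsdef, if_pos rfl]
      omega
    · simp only [hsdef, if_neg hm]
      exact le_max_left _ _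
  refine (mem_sgK0_iff.mp hw) ⟨s, hsG, i, ?_, ?_⟩
  · simp [hsdef]
  · intro m hm
    have h1 : sgTau G m - w m + 1 ≤ s m := by
      simp only [hsdef, if_neg hm]
      exact le_max_right _ _
    omega

lemma sgK0_inf {G : Set (I → ℤ)} {x y : I → ℤ}
    (hx : x ∈ sgK0 G) (hy : y ∈ sgK0 G) : (fun i => min (x i) (y i)) ∈ sgK0 G := by
  rw [mem_sgK0_iff]
  rintro ⟨s, hs, i, h1, h2⟩
  have h1' : min (x i) (y i) + s i = sgTau G i := h1
  rcases min_cases (x i) (y i) with ⟨hmin, _⟩ | ⟨hmin, _⟩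
  · refine (mem_sgK0_iff.mp hx) ⟨s, hs, i, by omega, ?_⟩
    intro m hm
    have h3 : sgTau G m < min (x m) (y m) + s m := h2 m hm
    have : min (x m) (y m) ≤ x m := min_le_left _ _
    omega
  · refine (mem_sgK0_iff.mp hy) ⟨s, hs, i, by omega, ?_⟩
    intro m hm
    have h3 : sgTau G m < min (x m) (y m) + s m := h2 m hm
    have : min (x m) (y m) ≤ y m := min_le_right _ _
    omega

lemma sgK0_add {G : Set (I → ℤ)} (hG : IsGoodSemigroup G) {w g : I → ℤ}
    (hw : w ∈ sgK0 G) (hg : g ∈ G) : w + g ∈ sgK0 G := by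
  rw [mem_sgK0_iff]
  rintro ⟨s, hs, i, h1, h2⟩
  refine (mem_sgK0_iff.mp hw) ⟨g + s, hG.2.1 g hg s hs, i, ?_, ?_⟩
  · simp only [Pi.add_apply] at h1 ⊢; omega
  · intro m hm
    have := h2 m hm
    simp only [Pi.add_apply] at this ⊢; omega

lemma gamma_le_mem_sgK0 {G : Set (I → ℤ)} (hG : IsGoodSemigroup G) {w : I → ℤ}
    (hw : sgGamma G ≤ w) : w ∈ sgK0 G := by
  rw [mem_sgK0_iff]
  rintro ⟨s, hs, i, h1, _⟩
  have h2 : 0 ≤ s i := hG.2.2.1 s hs i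
  have h3 : sgGamma G i ≤ w i := hw i
  have ht : sgTau G i = sgGamma G i - 1 := rfl
  omega

lemma sgK0_sgIdeal {G : Set (I → ℤ)} (hG : IsGoodSemigroup G) : IsSgIdeal G (sgK0 G) := by
  refine ⟨⟨0, subset_sgK0 hG hG.1⟩, fun α hα β hβ => sgK0_add hG hα hβ, ⟨sgGamma G, sgGamma_mem hG, ?_⟩⟩
  intro β hβ
  apply mem_of_gamma_le hG
  intro i
  have h1 := sgK0_nonneg hG hβ i
  simp only [Pi.add_apply, Pi.zero_apply] at h1 ⊢
  omega

lemma sgGamma_sgK0 {G : Set (I → ℤ)} (hG : IsGoodSemigroup G) :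
    sgGamma (sgK0 G) = sgGamma G := by
  classical
  have hγmem : sgGamma G ∈ sgCond (sgK0 G) := by
    rw [mem_sgCond]
    intro β hβ
    apply gamma_le_mem_sgK0 hG
    intro i
    have := hβ i
    simp only [Pi.zero_apply] at this
    simp only [Pi.add_apply]
    omega
  have hglb : ∀ c ∈ sgCond (sgK0 G), sgGamma G ≤ c := by
    intro c hc i
    by_contra hcon
    push_neg at hcon
    set P : I → ℤ := fun m => if m = i then sgTau G i else max (c m) (sgGamma G m) with hPdef
    have hPK : P ∈ sgK0 G := by
      have h1 : P - c ≥ 0 := by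
        intro m
        simp only [Pi.sub_apply, Pi.zero_apply, hPdef]
        by_cases hm : m = i
        · subst hm
          simp only [if_pos rfl, if_true]
          have ht : sgTau G m = sgGamma G m - 1 := rfl
          have hcon' : c m < sgGamma G m := hcon
          omega
        · simp only [if_neg hm]
          have := le_max_left (c m) (sgGamma G m)
          omega
      have h2 := mem_sgCond.mp hc (P - c) h1
      have h3 : c + (P - c) = P := by abel
      rwa [h3] at h2
    refine (mem_sgK0_iff.mp hPK) ⟨0, hG.1, i, ?_, ?_⟩
    · simp [hPdef]
    · intro m hm
      simp only [hPdef, Pi.zero_apply, if_neg hm, add_zero]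
      have h4 := le_max_right (c m) (sgGamma G m)
      have ht : sgTau G m = sgGamma G m - 1 := rfl
      omega
  funext i
  set T : Set ℤ := {n : ℤ | ∃ α ∈ sgCond (sgK0 G), α i = n} with hTdef
  have hbdd : BddBelow T := by
    refine ⟨sgGamma G i, ?_⟩
    rintro n ⟨c, hc, rfl⟩
    exact hglb c hc i
  have hmemT : sgGamma G i ∈ T := ⟨sgGamma G, hγmem, rfl⟩
  have h1 : sgGamma (sgK0 G) i ≤ sgGamma G i := by
    show sInf T ≤ sgGamma G i
    exact csInf_le hbdd hmemT
  have h2 : sgGamma G i ≤ sgGamma (sgK0 G) i := by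
    show sgGamma G i ≤ sInf T
    apply le_csInf ⟨sgGamma G i, hmemT⟩
    rintro n ⟨c, hc, rfl⟩
    exact hglb c hc i
  omega

end GoodProofs3
section GoodProofs4
set_option linter.unusedSectionVars false
variable {I : Type*} [Fintype I] [Nonempty I]

/-- Auxiliary notion for the proof that `K⁰` satisfies (E2): `w` is blocked if some
element of `G` exhibits a `Δ(τ)`-hit of `w` pinned at a coordinate where `x` and `y` differ. -/
def IsBlocked (G : Set (I → ℤ)) (x y w : I → ℤ) : Prop :=
  ∃ s ∈ G, ∃ a, x a ≠ y a ∧ w a + s a = sgTau G a ∧ ∀ m, m ≠ a → sgTau G m < w m + s m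

lemma sgK0_E2 {G : Set (I → ℤ)} (hG : IsGoodSemigroup G) : propE2 (sgK0 G) := by
  classical
  intro x hx y hy j hxy
  obtain ⟨z, hzeq⟩ : ∃ z : I → ℤ, ∀ i, z i = min (x i) (y i) := ⟨_, fun i => rfl⟩
  have hzK : z ∈ sgK0 G := by
    have : z = fun i => min (x i) (y i) := funext hzeq
    rw [this]; exact sgK0_inf hx hy
  have hzle : ∀ i, z i ≤ x i := fun i => by rw [hzeq i]; exact min_le_left _ _
  have hzley : ∀ i, z i ≤ y i := fun i => by rw [hzeq i]; exact min_le_right _ _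
  have hzj : z j = x j := by rw [hzeq j, hxy]; exact min_self _
  -- profiles
  obtain ⟨v0, hv0A, hv0j, hv0D⟩ :
      ∃ v0 : I → ℤ, (∀ k, x k ≠ y k → v0 k = z k) ∧ (v0 j = z j + 1) ∧
        (∀ k, x k = y k → k ≠ j → v0 k = z k) := by
    refine ⟨fun k => if x k ≠ y k then z k else (if k = j then z k + 1 else z k), ?_, ?_, ?_⟩
    · intro k hk; simp [hk]
    · simp [hxy]
    · intro k hk hkj; simp [hk, hkj]
  obtain ⟨cap, hcapA, hcapD1, hcapD2⟩ :
      ∃ cap : I → ℤ, (∀ k, x k ≠ y k → cap k = z k) ∧ (∀ k, x k = y k → v0 k ≤ cap k) ∧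
        (∀ k, x k = y k → sgGamma G k ≤ cap k) := by
    refine ⟨fun k => if x k ≠ y k then z k else max (v0 k) (sgGamma G k), ?_, ?_, ?_⟩
    · intro k hk; simp [hk]
    · intro k hk; simp [hk]
    · intro k hk; simp [hk]
  have hv0z : ∀ k, z k ≤ v0 k := by
    intro k
    by_cases hk : x k = y k
    · by_cases hkj : k = j
      · subst hkj; omega
      · rw [hv0D k hk hkj]
    · rw [hv0A k hk]
  have hv0cap : v0 ≤ cap := by
    intro k
    by_cases hk : x k = y k
    · exact hcapD1 k hk
    · rw [hcapA k hk, hv0A k hk]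
  -- Step A : v0 is not blocked
  have hv0nb : ¬ IsBlocked G x y v0 := by
    rintro ⟨s, hs, a, haA, h1, h2⟩
    have haj : a ≠ j := fun h => haA (h ▸ hxy)
    have h1' : z a + s a = sgTau G a := by rw [hv0A a haA] at h1; exact h1
    have hoff : ∀ m, m ≠ a → m ≠ j → sgTau G m < z m + s m := by
      intro m hma hmj
      have h3 := h2 m hma
      by_cases hm : x m = y m
      · rwa [hv0D m hm hmj] at h3
      · rwa [hv0A m hm] at h3
    have hjge : sgTau G j ≤ z j + s j := by
      have h3 := h2 j (Ne.symm haj)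
      rw [hv0j] at h3
      omega
    rcases lt_or_eq_of_le hjge with hjlt | hjeq
    · refine (mem_sgK0_iff.mp hzK) ⟨s, hs, a, h1', ?_⟩
      intro m hm
      by_cases hmj : m = j
      · subst hmj; omega
      · exact hoff m hm hmj
    · obtain ⟨y', hy'K, hy'a, hy'ge, hy'eq⟩ :
          ∃ y', y' ∈ sgK0 G ∧ z a < y' a ∧ (∀ m, z m ≤ y' m) ∧ (∀ m, x m = y m → y' m = z m) := by
        by_cases h : x a ≤ y a
        · refine ⟨y, hy, ?_, hzley, ?_⟩
          · have h4 := hzeq a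
            have h5 : min (x a) (y a) = x a := min_eq_left h
            omega
          · intro m hm
            have h4 := hzeq m
            have h5 : min (x m) (y m) = y m := by rw [hm]; exact min_self _
            omega
        · refine ⟨x, hx, ?_, hzle, ?_⟩
          · have h4 := hzeq a
            have h5 : min (x a) (y a) = y a := min_eq_right (by omega)
            omega
          · intro m hm
            have h4 := hzeq m
            have h5 : min (x m) (y m) = x m := by rw [hm]; exact min_self _
            omega
      refine (mem_sgK0_iff.mp hy'K) ⟨s, hs, j, ?_, ?_⟩
      · have h4 := hy'eq j hxy
        omega
      · intro m hmj
        by_cases hma : m = a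
        · subst hma
          omega
        · have h3 := hoff m hma hmj
          have h4 := hy'ge m
          omega
  -- local maximum search
  have search : ∀ n : ℕ, ∀ w : I → ℤ, v0 ≤ w → w ≤ cap → ¬ IsBlocked G x y w →
      (∑ k, (cap k - w k)) ≤ (n : ℤ) →
      ∃ w', v0 ≤ w' ∧ w' ≤ cap ∧ ¬ IsBlocked G x y w' ∧
        (∀ k, w' k < cap k → ∀ w'' : I → ℤ, w'' k = w' k + 1 → (∀ m, m ≠ k → w'' m = w' m) →
          IsBlocked G x y w'') := by
    intro n
    induction n with
    | zero =>
        intro w hw1 hw2 hwnb hsum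
        refine ⟨w, hw1, hw2, hwnb, ?_⟩
        intro k hk
        exfalso
        have hterm : ∀ m : I, 0 ≤ cap m - w m := fun m => by
          have h : w m ≤ cap m := hw2 m; omega
        have : (0:ℤ) < ∑ m, (cap m - w m) := by
          calc (0:ℤ) < cap k - w k := by omega
          _ ≤ ∑ m, (cap m - w m) := Finset.single_le_sum (fun m _ => hterm m) (Finset.mem_univ k)
        omega
    | succ n ih =>
        intro w hw1 hw2 hwnb hsum
        by_cases hloc : ∀ k, w k < cap k → ∀ w'' : I → ℤ, w'' k = w k + 1 →
            (∀ m, m ≠ k → w'' m = w m) → IsBlocked G x y w''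
        · exact ⟨w, hw1, hw2, hwnb, hloc⟩
        · push_neg at hloc
          obtain ⟨k, hk1, w2, hupk, hupm, hk2⟩ := hloc
          have hb1 : v0 ≤ w2 := by
            intro m
            by_cases hm : m = k
            · subst hm
              have h : v0 m ≤ w m := hw1 m
              rw [hupk]
              linarith [h]
            · rw [hupm m hm]; exact hw1 m
          have hb2 : w2 ≤ cap := by
            intro m
            by_cases hm : m = k
            · subst hm
              rw [hupk]
              linarith [hk1]
            · rw [hupm m hm]; exact hw2 m
          have hsum2 : (∑ m, (cap m - w2 m)) ≤ (n : ℤ) := by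
            have hlt : (∑ m, (cap m - w2 m)) < ∑ m, (cap m - w m) := by
              apply Finset.sum_lt_sum
              · intro m _
                by_cases hm : m = k
                · subst hm
                  rw [hupk]
                  omega
                · rw [hupm m hm]
              · refine ⟨k, Finset.mem_univ k, ?_⟩
                rw [hupk]
                omega
            omega
          exact ih w2 hb1 hb2 hk2 hsum2
  have hterm0 : (∑ k, (cap k - v0 k)) ≤ (((∑ k, (cap k - v0 k))).toNat : ℤ) := Int.self_le_toNat _
  obtain ⟨w, hwv0, hwcap, hwnb, hwloc⟩ :=
    search _ v0 le_rfl hv0cap hv0nb hterm0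
  -- w is in K⁰
  have hwK : w ∈ sgK0 G := by
    rw [mem_sgK0_iff]
    rintro ⟨s, hs, i, h1, h2⟩
    by_cases hiA : x i ≠ y i
    · exact hwnb ⟨s, hs, i, hiA, h1, h2⟩
    · push_neg at hiA
      have hsi : 0 ≤ s i := hG.2.2.1 s hs i
      have hγi : sgGamma G i ≤ cap i := hcapD2 i hiA
      have htau : sgTau G i = sgGamma G i - 1 := rfl
      have hik : w i < cap i := by omega
      obtain ⟨s', hs', a, haA, h1', h2'⟩ := hwloc i hik
        (fun m => if m = i then w i + 1 else w m) (by simp) (fun m hm => by simp [hm])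
      have hai : a ≠ i := fun h => haA (h ▸ hiA)
      have h1'' : w a + s' a = sgTau G a := by
        have h0 := h1'
        simp only [if_neg hai] at h0
        exact h0
      have hji : sgTau G i ≤ w i + s' i := by
        have h0 := h2' i (Ne.symm hai)
        simp only [if_pos rfl] at h0
        omega
      rcases lt_or_eq_of_le hji with hlt | heq
      · refine hwnb ⟨s', hs', a, haA, h1'', ?_⟩
        intro m hma
        by_cases hmi : m = i
        · subst hmi; omega
        · have h0 := h2' m hma
          simp only [if_neg hmi] at h0
          exact h0
      · have htie : s' i = s i := by omega
        obtain ⟨ε, hε, hεi, hprop⟩ := hG.2.2.2.2.2 s' hs' s hs i htie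
        refine hwnb ⟨ε, hε, a, haA, ?_, ?_⟩
        · have hsa : sgTau G a < w a + s a := h2 a hai
          have hne : s' a ≠ s a := by omega
          have hmin : min (s' a) (s a) = s' a := by
            apply min_eq_left; omega
          have h0 := (hprop a).2 hne
          rw [h0, hmin]
          exact h1''
        · intro m hma
          by_cases hmi : m = i
          · subst hmi
            omega
          · have hm1 : sgTau G m < w m + s' m := by
              have h0 := h2' m hma
              simp only [if_neg hmi] at h0
              exact h0
            have hm2 : sgTau G m < w m + s m := h2 m hmi
            have hm3 : min (s' m) (s m) ≤ ε m := (hprop m).1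
            rcases min_cases (s' m) (s m) with ⟨hc, _⟩ | ⟨hc, _⟩ <;> omega
  -- conclude
  refine ⟨w, hwK, ?_, ?_⟩
  · have h1 : v0 j ≤ w j := hwv0 j
    omega
  · intro i
    constructor
    · have h1 : v0 i ≤ w i := hwv0 i
      have h2 := hv0z i
      have h3 := hzeq i
      show min (x i) (y i) ≤ w i
      omega
    · intro hiA
      have h1 : v0 i ≤ w i := hwv0 i
      have h2 : w i ≤ cap i := hwcap i
      rw [hv0A i hiA] at h1
      rw [hcapA i hiA] at h2
      have h3 := hzeq i
      show w i = min (x i) (y i)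
      omega

end GoodProofs4
section GoodProofs5
set_option linter.unusedSectionVars false
variable {I : Type*} [Fintype I] [Nonempty I]

lemma sgK0_goodIdeal {G : Set (I → ℤ)} (hG : IsGoodSemigroup G) : IsGoodIdeal G (sgK0 G) :=
  ⟨sgK0_sgIdeal hG, fun a ha b hb => sgK0_inf ha hb, sgK0_E2 hG⟩

lemma sgK0_eq_self {G : Set (I → ℤ)} (hG : IsGoodSemigroup G)
    (hcan : IsCanonicalIdeal G G) : sgK0 G = G :=
  hcan.2 (sgK0 G) (sgK0_goodIdeal hG) (sgGamma_sgK0 hG) (subset_sgK0 hG)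

end GoodProofs5

/-- **Lemma.** Let `S` be a local symmetric good semigroup with maximal ideal
`M_S = S \ {0}`. If `M_S − M_S` is symmetric, then `α − μ_{M_S} ∈ S` for every
`α ∈ M_S \ C_S`. -/
theorem stmt_10 {I : Type*} [Fintype I] [Nonempty I] (S : Set (I → ℤ))
    (hS : IsSymmetricSg S) (hloc : IsLocalSg S)
    (hMM : IsSymmetricSg (sgDiff (S \ {0}) (S \ {0}))) :
    ∀ α ∈ (S \ {0}) \ sgCond S, α - sgMu (S \ {0}) ∈ S := by
  classical
  intro α hα
  have hSgood : IsGoodSemigroup S := hS.1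
  set M : Set (I → ℤ) := S \ {0} with hMdef
  set T : Set (I → ℤ) := sgDiff M M with hTdef
  have hTgood : IsGoodSemigroup T := hMM.1
  obtain ⟨hαM, hαC⟩ := hα
  have hαS : α ∈ S := hαM.1
  have hα0 : α ≠ 0 := hαM.2
  -- positivity of nonzero elements of S
  have hpos : ∀ a ∈ S, a ≠ 0 → ∀ i, 1 ≤ a i := by
    intro a ha hne i
    have h0 : (0:ℤ) ≤ a i := hSgood.2.2.1 a ha i
    rcases lt_or_eq_of_le h0 with h | h
    · omega
    · exact absurd (hloc a ha ⟨i, h.symm⟩) hne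
  have hMiff : ∀ a, a ∈ M ↔ a ∈ S ∧ a ≠ 0 := by
    intro a
    rw [hMdef]
    simp [Set.mem_diff]
  have hTiff : ∀ w, w ∈ T ↔ ∀ β ∈ M, w + β ∈ M := fun w => Iff.rfl
  -- μ = sgMu M
  have hμspec : sgMu M ∈ M ∧ ∀ m ∈ M, sgMu M ≤ m := by
    apply sgMu_spec
    · exact ⟨α, hαM⟩
    · exact ⟨0, fun e he => hSgood.2.2.1 e ((hMiff e).mp he).1⟩
    · intro a ha b hb
      obtain ⟨haS, haN⟩ := (hMiff a).mp ha
      obtain ⟨hbS, hbN⟩ := (hMiff b).mp hb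
      rw [hMiff]
      refine ⟨hSgood.2.2.2.2.1 a haS b hbS, ?_⟩
      intro hcon
      have hi : I := Classical.arbitrary I
      have h1 : 1 ≤ a hi := hpos a haS haN hi
      have h2 : 1 ≤ b hi := hpos b hbS hbN hi
      have h3 : min (a hi) (b hi) = 0 := by
        have := congrFun hcon hi
        simpa using this
      omega
  set μ : I → ℤ := sgMu M with hμdef
  have hμM : μ ∈ M := hμspec.1
  have hμpos : ∀ i, 1 ≤ μ i := hpos μ ((hMiff μ).mp hμM).1 ((hMiff μ).mp hμM).2
  have hμle : ∀ m ∈ M, ∀ i, μ i ≤ m i := fun m hm i => hμspec.2 m hm i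
  -- γ positivity
  have hγpos : ∀ i, 1 ≤ sgGamma S i := by
    intro i
    by_contra hcon
    push_neg at hcon
    have h0 : 0 ≤ sgGamma S i := sgGamma_nonneg hSgood i
    have hγi : sgGamma S i = 0 := by omega
    have hγ0 : sgGamma S = 0 := hloc _ (sgGamma_mem hSgood) ⟨i, hγi⟩
    apply hαC
    rw [mem_sgCond]
    intro β hβ
    apply mem_of_gamma_le hSgood
    intro m
    rw [hγ0]
    have h1 : 0 ≤ α m := hSgood.2.2.1 α hαS m
    have h2 : 0 ≤ β m := hβ m
    simp only [Pi.add_apply, Pi.zero_apply]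
    omega
  -- T absorbs M
  have hTM : ∀ t ∈ T, ∀ m ∈ M, t + m ∈ M := by
    intro t ht m hm
    exact (hTiff t).mp ht m hm
  -- γ_T = γ_S - μ
  have hγT : ∀ i, sgGamma T i = sgGamma S i - μ i := by
    have hmem : (sgGamma S - μ) ∈ sgCond T := by
      rw [mem_sgCond]
      intro β hβ
      rw [hTiff]
      intro m hm
      have hmemS : sgGamma S - μ + β + m ∈ S := by
        apply mem_of_gamma_le hSgood
        intro k
        have h1 := hμle m hm k
        have h2 := hβ k
        simp only [Pi.zero_apply] at h2
        simp only [Pi.add_apply, Pi.sub_apply]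
        omega
      rw [hMiff]
      refine ⟨hmemS, ?_⟩
      intro hcon
      have hi : I := Classical.arbitrary I
      have h3 := congrFun hcon hi
      simp only [Pi.add_apply, Pi.sub_apply, Pi.zero_apply] at h3
      have h1 := hμle m hm hi
      have h2 := hβ hi
      simp only [Pi.zero_apply] at h2
      have h4 := hγpos hi
      have h5 := hpos m ((hMiff m).mp hm).1 ((hMiff m).mp hm).2 hi
      omega
    have hglb : ∀ c ∈ sgCond T, ∀ i, sgGamma S i - μ i ≤ c i := by
      intro c hc i
      have hcμ : c + μ ∈ sgCond S := by
        rw [mem_sgCond]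
        intro β hβ
        have h1 : c + β ∈ T := mem_sgCond.mp hc β hβ
        have h2 : (c + β) + μ ∈ M := hTM _ h1 μ hμM
        have h3 : c + μ + β = (c + β) + μ := by abel
        rw [h3]
        exact ((hMiff _).mp h2).1
      have := (sgGamma_spec hSgood).2 _ hcμ i
      simp only [Pi.add_apply] at this
      omega
    intro i
    set Q : Set ℤ := {n : ℤ | ∃ c ∈ sgCond T, c i = n} with hQdef
    have hbdd : BddBelow Q := by
      refine ⟨sgGamma S i - μ i, ?_⟩
      rintro n ⟨c, hc, rfl⟩
      exact hglb c hc i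
    have hmemQ : sgGamma S i - μ i ∈ Q := ⟨sgGamma S - μ, hmem, by simp⟩
    have h1 : sgGamma T i ≤ sgGamma S i - μ i := by
      show sInf Q ≤ sgGamma S i - μ i
      exact csInf_le hbdd hmemQ
    have h2 : sgGamma S i - μ i ≤ sgGamma T i := by
      show sgGamma S i - μ i ≤ sInf Q
      apply le_csInf ⟨_, hmemQ⟩
      rintro n ⟨c, hc, rfl⟩
      exact hglb c hc i
    omega
  have hτT : ∀ i, sgTau T i = sgTau S i - μ i := by
    intro i
    have h1 : sgTau T i = sgGamma T i - 1 := rfl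
    have h2 : sgTau S i = sgGamma S i - 1 := rfl
    have := hγT i
    omega
  -- the two symmetry identifications
  have hST : sgK0 S = S := sgK0_eq_self hSgood hS.2
  have hTT : sgK0 T = T := sgK0_eq_self hTgood hMM.2
  -- main argument
  set x : I → ℤ := α - μ with hxdef
  have hxα : ∀ i, α i = x i + μ i := by
    intro i
    simp [hxdef]
  show x ∈ S
  by_contra hxS
  have hxK : ∃ s ∈ S, ∃ i : I, x i + s i = sgTau S i ∧
      ∀ m, m ≠ i → sgTau S m < x m + s m := by
    have h1 : x ∉ sgK0 S := by rw [hST]; exact hxS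
    by_contra hcon
    exact h1 (mem_sgK0_iff.mpr hcon)
  obtain ⟨s, hs, i, h1, h2⟩ := hxK
  by_cases hs0 : s = 0
  · -- the witness cannot be 0, else α would be in the conductor
    subst hs0
    apply hαC
    rw [mem_sgCond]
    intro β hβ
    apply mem_of_gamma_le hSgood
    intro m
    have hβm : (0:ℤ) ≤ β m := hβ m
    have hτ : sgTau S m = sgGamma S m - 1 := rfl
    have hμm := hμpos m
    have hxm := hxα m
    simp only [Pi.add_apply]
    by_cases hm : m = i
    · subst hm
      have h1' : x m + (0 : I → ℤ) m = sgTau S m := h1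
      simp only [Pi.zero_apply] at h1'
      omega
    · have h2' := h2 m hm
      simp only [Pi.zero_apply] at h2'
      omega
  · have hsM : s ∈ M := (hMiff s).mpr ⟨hs, hs0⟩
    by_cases hxT : x ∈ T
    · -- x ∈ T : then x + s ∈ M ⊆ S lies in Δ(τ_S), contradiction
      have hxs : x + s ∈ M := hTM x hxT s hsM
      refine delta_tau_empty hSgood (x + s) ((hMiff _).mp hxs).1 i ⟨?_, ?_⟩
      · simp only [Pi.add_apply]; omega
      · intro m hm
        have := h2 m hm
        simp only [Pi.add_apply]; omega
    · -- x ∉ T : use symmetry of T to produce an element of Δ(τ_S) in S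
      have hxKT : ∃ t ∈ T, ∃ k : I, x k + t k = sgTau T k ∧
          ∀ m, m ≠ k → sgTau T m < x m + t m := by
        have h3 : x ∉ sgK0 T := by rw [hTT]; exact hxT
        by_contra hcon
        exact h3 (mem_sgK0_iff.mpr hcon)
      obtain ⟨t, ht, k, g1, g2⟩ := hxKT
      have hp : α + t ∈ M := by
        have h4 := hTM t ht α hαM
        have hcomm : t + α = α + t := by abel
        rwa [hcomm] at h4
      refine delta_tau_empty hSgood (α + t) ((hMiff _).mp hp).1 k ⟨?_, ?_⟩
      · simp only [Pi.add_apply]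
        have h5 := hτT k
        have h6 := hxα k
        omega
      · intro m hm
        have hτm := hτT m
        have hxm := hxα m
        have h7 := g2 m hm
        simp only [Pi.add_apply]
        omega
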